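/- Consider the EMP update for an edge e = {i,j} and endpoint i: λ'_{e,i}(x) = λ_{e,i}(x) + (1/(2η))·log(S_{e,i}^λ(x)/μ_i^λ(x)), all other coordinates unchanged. Then the resulting dual iterate λ' satisfies the block optimality condition S_{e,i}^{λ'}(x) = μ_i^{λ'}(x) for all x ∈ χ, i.e., λ' minimizes L over the block coordinate {λ_{e,i}(x)}_{x∈χ}. -/

import Mathlib

open Finset

noncomputable section

variable {n m d : ℕ}

/-- The endpoint of edge `e` at side `s`. -/
def ep (ends : Fin m → Fin n × Fin n) (e : Fin m) (s : Fin 2) : Fin n :=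
  if s = 0 then (ends e).1 else (ends e).2

/-- Unnormalized vertex factor. -/
def vExp (η : ℝ) (ends : Fin m → Fin n × Fin n) (Ci : Fin n → Fin d → ℝ)
    (lam : Fin m → Fin 2 → Fin d → ℝ) (i : Fin n) (x : Fin d) : ℝ :=
  Real.exp (η * (-(Ci i x) +
    ∑ e, ∑ s, if ep ends e s = i then lam e s x else 0))

/-- Unnormalized edge factor. -/
def eExp (η : ℝ) (Ce : Fin m → Fin d → Fin d → ℝ)
    (lam : Fin m → Fin 2 → Fin d → ℝ) (e : Fin m) (x₁ x₂ : Fin d) : ℝ :=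
  Real.exp (η * (-(Ce e x₁ x₂) - lam e 0 x₁ - lam e 1 x₂))

/-- Normalized vertex pseudo-marginal `μ_i^λ`. -/
def muV (η : ℝ) (ends : Fin m → Fin n × Fin n) (Ci : Fin n → Fin d → ℝ)
    (lam : Fin m → Fin 2 → Fin d → ℝ) (i : Fin n) (x : Fin d) : ℝ :=
  vExp η ends Ci lam i x / ∑ x', vExp η ends Ci lam i x'

/-- Normalized edge pseudo-marginal `μ_e^λ`. -/
def muE (η : ℝ) (Ce : Fin m → Fin d → Fin d → ℝ)
    (lam : Fin m → Fin 2 → Fin d → ℝ) (e : Fin m) (x₁ x₂ : Fin d) : ℝ :=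
  eExp η Ce lam e x₁ x₂ / ∑ y₁, ∑ y₂, eExp η Ce lam e y₁ y₂

/-- Marginalization `S_{e,i}^λ` of the edge pseudo-marginal onto endpoint `s`. -/
def Smarg (η : ℝ) (Ce : Fin m → Fin d → Fin d → ℝ)
    (lam : Fin m → Fin 2 → Fin d → ℝ) (e : Fin m) (s : Fin 2) (x : Fin d) : ℝ :=
  if s = 0 then ∑ x₂, muE η Ce lam e x x₂ else ∑ x₁, muE η Ce lam e x₁ x

/-- The dual objective `L`. -/
def dualL (η : ℝ) (ends : Fin m → Fin n × Fin n) (Ci : Fin n → Fin d → ℝ)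
    (Ce : Fin m → Fin d → Fin d → ℝ) (lam : Fin m → Fin 2 → Fin d → ℝ) : ℝ :=
  (1 / η) * ∑ i, Real.log (∑ x, vExp η ends Ci lam i x)
    + (1 / η) * ∑ e, Real.log (∑ x₁, ∑ x₂, eExp η Ce lam e x₁ x₂)

/-- The EMP update at edge `e₀`, endpoint `s₀`:
`λ'_{e₀,i₀}(x) = λ_{e₀,i₀}(x) + (1/(2η)) log (S_{e₀,i₀}^λ(x)/μ_{i₀}^λ(x))`,
all other coordinates unchanged. -/
def empUpdate (η : ℝ) (ends : Fin m → Fin n × Fin n) (Ci : Fin n → Fin d → ℝ)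
    (Ce : Fin m → Fin d → Fin d → ℝ) (lam : Fin m → Fin 2 → Fin d → ℝ)
    (e₀ : Fin m) (s₀ : Fin 2) : Fin m → Fin 2 → Fin d → ℝ :=
  fun e s x =>
    if e = e₀ ∧ s = s₀ then
      lam e s x + (1 / (2 * η)) *
        Real.log (Smarg η Ce lam e s x / muV η ends Ci lam (ep ends e s) x)
    else lam e s x

/-! ### Auxiliary lemmas -/

private lemma sum_ite_pair (f : Fin m → Fin 2 → ℝ) (e₀ : Fin m) (s₀ : Fin 2) :
    (∑ e, ∑ s, if e = e₀ ∧ s = s₀ then f e s else 0) = f e₀ s₀ := by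
  simp [ite_and]

private lemma vExp_update (η : ℝ) (ends : Fin m → Fin n × Fin n) (Ci : Fin n → Fin d → ℝ)
    (lam lam' : Fin m → Fin 2 → Fin d → ℝ) (e₀ : Fin m) (s₀ : Fin 2)
    (hoff : ∀ e s x, ¬(e = e₀ ∧ s = s₀) → lam' e s x = lam e s x)
    (i : Fin n) (x : Fin d) :
    vExp η ends Ci lam' i x = vExp η ends Ci lam i x *
      Real.exp (η * (if ep ends e₀ s₀ = i then lam' e₀ s₀ x - lam e₀ s₀ x else 0)) := by
  unfold vExp
  rw [← Real.exp_add]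
  congr 1
  have key : (∑ e, ∑ s, if ep ends e s = i then lam' e s x else 0)
      = (∑ e, ∑ s, if ep ends e s = i then lam e s x else 0)
        + (if ep ends e₀ s₀ = i then lam' e₀ s₀ x - lam e₀ s₀ x else 0) := by
    calc (∑ e, ∑ s, if ep ends e s = i then lam' e s x else 0)
        = ∑ e, ∑ s, ((if ep ends e s = i then lam e s x else 0)
            + (if e = e₀ ∧ s = s₀ then
                (if ep ends e s = i then lam' e s x - lam e s x else 0) else 0)) := by
          refine Finset.sum_congr rfl fun e _ => Finset.sum_congr rfl fun s _ => ?_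
          by_cases h : e = e₀ ∧ s = s₀
          · rw [if_pos h]
            split <;> ring
          · rw [hoff e s x h, if_neg h, add_zero]
      _ = _ := by
          simp only [Finset.sum_add_distrib]
          rw [sum_ite_pair (fun e s => if ep ends e s = i then lam' e s x - lam e s x else 0)]
  rw [key]
  ring

private lemma eExp_update_ne (η : ℝ) (Ce : Fin m → Fin d → Fin d → ℝ)
    (lam lam' : Fin m → Fin 2 → Fin d → ℝ) (e₀ : Fin m) (s₀ : Fin 2)
    (hoff : ∀ e s x, ¬(e = e₀ ∧ s = s₀) → lam' e s x = lam e s x)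
    (e : Fin m) (he : e ≠ e₀) (x₁ x₂ : Fin d) :
    eExp η Ce lam' e x₁ x₂ = eExp η Ce lam e x₁ x₂ := by
  unfold eExp
  rw [hoff e 0 x₁ (by simp [he]), hoff e 1 x₂ (by simp [he])]

private lemma fin2_cases (s : Fin 2) : s = 0 ∨ s = 1 := by omega

private lemma eExp_update_e₀ (η : ℝ) (Ce : Fin m → Fin d → Fin d → ℝ)
    (lam lam' : Fin m → Fin 2 → Fin d → ℝ) (e₀ : Fin m) (s₀ : Fin 2)
    (hoff : ∀ e s x, ¬(e = e₀ ∧ s = s₀) → lam' e s x = lam e s x)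
    (x₁ x₂ : Fin d) :
    eExp η Ce lam' e₀ x₁ x₂ = eExp η Ce lam e₀ x₁ x₂ *
      Real.exp (-(η * (lam' e₀ s₀ (if s₀ = 0 then x₁ else x₂)
        - lam e₀ s₀ (if s₀ = 0 then x₁ else x₂)))) := by
  unfold eExp
  rw [← Real.exp_add]
  congr 1
  rcases fin2_cases s₀ with hs | hs <;> subst hs
  · rw [hoff e₀ 1 x₂ (by simp), if_pos rfl]
    ring
  · rw [hoff e₀ 0 x₁ (by simp), if_neg (by decide)]
    ring

private lemma Smarg_eq (η : ℝ) (Ce : Fin m → Fin d → Fin d → ℝ)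
    (lam : Fin m → Fin 2 → Fin d → ℝ) (e : Fin m) (s : Fin 2) (x : Fin d) :
    Smarg η Ce lam e s x =
      (if s = 0 then ∑ y, eExp η Ce lam e x y else ∑ y, eExp η Ce lam e y x)
        / (∑ x₁, ∑ x₂, eExp η Ce lam e x₁ x₂) := by
  unfold Smarg muE
  split <;> rw [Finset.sum_div]

/-- Core inequality: the updated point minimizes `A·B` among positive weight vectors,
via Cauchy–Schwarz. -/
private lemma core_ineq {d : ℕ} (v T u w : Fin d → ℝ)
    (hv : ∀ x, 0 < v x) (hT : ∀ x, 0 < T x) (hu : ∀ x, 0 < u x) (hw : ∀ x, 0 < w x)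
    (c : ℝ) (hc : 0 < c) (hmatch : ∀ x, v x * u x = c * (T x / u x)) :
    (∑ x, v x * u x) * (∑ x, T x / u x) ≤ (∑ x, v x * w x) * (∑ x, T x / w x) := by
  have hsq : ∀ x : Fin d, Real.sqrt (v x * T x) ^ 2 = (v x * w x) * (T x / w x) := by
    intro x
    rw [Real.sq_sqrt (mul_pos (hv x) (hT x)).le]
    field_simp [(hw x).ne']
  have CS := Finset.sum_sq_le_sum_mul_sum_of_sq_eq_mul Finset.univ
    (r := fun x => Real.sqrt (v x * T x))
    (f := fun x => v x * w x) (g := fun x => T x / w x)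
    (fun x _ => (mul_pos (hv x) (hw x)).le) (fun x _ => (div_pos (hT x) (hw x)).le)
    (fun x _ => hsq x)
  refine le_trans (le_of_eq ?_) CS
  have hr : ∀ x, Real.sqrt (v x * T x) = Real.sqrt c * (T x / u x) := by
    intro x
    have h1 : v x * T x = c * (T x / u x) ^ 2 := by
      have h2 : v x * T x = (v x * u x) * (T x / u x) := by
        field_simp [(hu x).ne']
      rw [h2, hmatch x]
      ring
    rw [h1, Real.sqrt_mul hc.le, Real.sqrt_sq (div_pos (hT x) (hu x)).le]
  calc (∑ x, v x * u x) * (∑ x, T x / u x)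
      = (Real.sqrt c * Real.sqrt c) * ((∑ x, T x / u x) * (∑ x, T x / u x)) := by
        rw [Real.mul_self_sqrt hc.le]
        simp_rw [hmatch]
        rw [← Finset.mul_sum]
        ring
    _ = (∑ x, Real.sqrt (v x * T x)) ^ 2 := by
        simp_rw [hr]
        rw [← Finset.mul_sum]
        ring


private lemma Tgen (η : ℝ) (Ce : Fin m → Fin d → Fin d → ℝ)
    (lam lam'' : Fin m → Fin 2 → Fin d → ℝ) (e₀ : Fin m) (s₀ : Fin 2)
    (hoff'' : ∀ e s x, ¬(e = e₀ ∧ s = s₀) → lam'' e s x = lam e s x) (x : Fin d) :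
    (if s₀ = 0 then ∑ y, eExp η Ce lam'' e₀ x y else ∑ y, eExp η Ce lam'' e₀ y x)
      = (if s₀ = 0 then ∑ y, eExp η Ce lam e₀ x y else ∑ y, eExp η Ce lam e₀ y x)
        * Real.exp (-(η * (lam'' e₀ s₀ x - lam e₀ s₀ x))) := by
  rcases fin2_cases s₀ with hs | hs
  · rw [if_pos hs, if_pos hs]
    calc (∑ y, eExp η Ce lam'' e₀ x y)
        = ∑ y, eExp η Ce lam e₀ x y
            * Real.exp (-(η * (lam'' e₀ s₀ x - lam e₀ s₀ x))) := by
          refine Finset.sum_congr rfl fun y _ => ?_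
          rw [eExp_update_e₀ η Ce lam lam'' e₀ s₀ hoff'' x y, if_pos hs]
      _ = _ := by rw [← Finset.sum_mul]
  · have hs' : ¬ s₀ = 0 := by simp [hs]
    rw [if_neg hs', if_neg hs']
    calc (∑ y, eExp η Ce lam'' e₀ y x)
        = ∑ y, eExp η Ce lam e₀ y x
            * Real.exp (-(η * (lam'' e₀ s₀ x - lam e₀ s₀ x))) := by
          refine Finset.sum_congr rfl fun y _ => ?_
          rw [eExp_update_e₀ η Ce lam lam'' e₀ s₀ hoff'' y x, if_neg hs']
      _ = _ := by rw [← Finset.sum_mul]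

private lemma Egen (η : ℝ) (Ce : Fin m → Fin d → Fin d → ℝ)
    (lam lam'' : Fin m → Fin 2 → Fin d → ℝ) (e₀ : Fin m) (s₀ : Fin 2)
    (hoff'' : ∀ e s x, ¬(e = e₀ ∧ s = s₀) → lam'' e s x = lam e s x) :
    (∑ x₁, ∑ x₂, eExp η Ce lam'' e₀ x₁ x₂)
      = ∑ x, (if s₀ = 0 then ∑ y, eExp η Ce lam e₀ x y else ∑ y, eExp η Ce lam e₀ y x)
          * Real.exp (-(η * (lam'' e₀ s₀ x - lam e₀ s₀ x))) := by
  have step : (∑ x₁, ∑ x₂, eExp η Ce lam'' e₀ x₁ x₂)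
      = ∑ x, (if s₀ = 0 then ∑ y, eExp η Ce lam'' e₀ x y
          else ∑ y, eExp η Ce lam'' e₀ y x) := by
    rcases fin2_cases s₀ with hs | hs
    · simp only [if_pos hs]
    · simp only [if_neg (show ¬ s₀ = 0 by simp [hs])]
      exact Finset.sum_comm
  rw [step]
  exact Finset.sum_congr rfl fun x _ => Tgen η Ce lam lam'' e₀ s₀ hoff'' x

private lemma dualL_decomp (η : ℝ) (ends : Fin m → Fin n × Fin n) (Ci : Fin n → Fin d → ℝ)
    (Ce : Fin m → Fin d → Fin d → ℝ) (lam : Fin m → Fin 2 → Fin d → ℝ)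
    (e₀ : Fin m) (s₀ : Fin 2) (lam'' : Fin m → Fin 2 → Fin d → ℝ)
    (hoff'' : ∀ e s x, ¬(e = e₀ ∧ s = s₀) → lam'' e s x = lam e s x) :
    dualL η ends Ci Ce lam''
      = (1 / η) * (Real.log (∑ x, vExp η ends Ci lam (ep ends e₀ s₀) x
            * Real.exp (η * (lam'' e₀ s₀ x - lam e₀ s₀ x)))
          + ∑ i ∈ Finset.univ.erase (ep ends e₀ s₀),
              Real.log (∑ x, vExp η ends Ci lam i x))
        + (1 / η) * (Real.log (∑ x, (if s₀ = 0 then ∑ y, eExp η Ce lam e₀ x y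
              else ∑ y, eExp η Ce lam e₀ y x)
            * Real.exp (-(η * (lam'' e₀ s₀ x - lam e₀ s₀ x))))
          + ∑ e ∈ Finset.univ.erase e₀,
              Real.log (∑ x₁, ∑ x₂, eExp η Ce lam e x₁ x₂)) := by
  have hVsum : (∑ i, Real.log (∑ x, vExp η ends Ci lam'' i x))
      = Real.log (∑ x, vExp η ends Ci lam (ep ends e₀ s₀) x
          * Real.exp (η * (lam'' e₀ s₀ x - lam e₀ s₀ x)))
        + ∑ i ∈ Finset.univ.erase (ep ends e₀ s₀),
            Real.log (∑ x, vExp η ends Ci lam i x) := by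
    have h1 : (∑ x, vExp η ends Ci lam'' (ep ends e₀ s₀) x)
        = ∑ x, vExp η ends Ci lam (ep ends e₀ s₀) x
            * Real.exp (η * (lam'' e₀ s₀ x - lam e₀ s₀ x)) :=
      Finset.sum_congr rfl fun x _ => by
        rw [vExp_update η ends Ci lam lam'' e₀ s₀ hoff'' (ep ends e₀ s₀) x, if_pos rfl]
    have h2 : (∑ i ∈ Finset.univ.erase (ep ends e₀ s₀),
          Real.log (∑ x, vExp η ends Ci lam'' i x))
        = ∑ i ∈ Finset.univ.erase (ep ends e₀ s₀),
            Real.log (∑ x, vExp η ends Ci lam i x) := by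
      refine Finset.sum_congr rfl fun i hi => ?_
      have h3 : (∑ x, vExp η ends Ci lam'' i x) = ∑ x, vExp η ends Ci lam i x :=
        Finset.sum_congr rfl fun x _ => by
          rw [vExp_update η ends Ci lam lam'' e₀ s₀ hoff'' i x,
            if_neg (Finset.ne_of_mem_erase hi).symm, mul_zero, Real.exp_zero, mul_one]
      rw [h3]
    rw [← Finset.add_sum_erase Finset.univ
      (fun i => Real.log (∑ x, vExp η ends Ci lam'' i x)) (Finset.mem_univ (ep ends e₀ s₀)),
      h1, h2]
  have hEsum : (∑ e, Real.log (∑ x₁, ∑ x₂, eExp η Ce lam'' e x₁ x₂))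
      = Real.log (∑ x, (if s₀ = 0 then ∑ y, eExp η Ce lam e₀ x y
            else ∑ y, eExp η Ce lam e₀ y x)
          * Real.exp (-(η * (lam'' e₀ s₀ x - lam e₀ s₀ x))))
        + ∑ e ∈ Finset.univ.erase e₀,
            Real.log (∑ x₁, ∑ x₂, eExp η Ce lam e x₁ x₂) := by
    have h2 : (∑ e ∈ Finset.univ.erase e₀,
          Real.log (∑ x₁, ∑ x₂, eExp η Ce lam'' e x₁ x₂))
        = ∑ e ∈ Finset.univ.erase e₀,
            Real.log (∑ x₁, ∑ x₂, eExp η Ce lam e x₁ x₂) := by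
      refine Finset.sum_congr rfl fun e he => ?_
      have h3 : (∑ x₁, ∑ x₂, eExp η Ce lam'' e x₁ x₂)
          = ∑ x₁, ∑ x₂, eExp η Ce lam e x₁ x₂ :=
        Finset.sum_congr rfl fun x₁ _ => Finset.sum_congr rfl fun x₂ _ =>
          eExp_update_ne η Ce lam lam'' e₀ s₀ hoff'' e (Finset.ne_of_mem_erase he) x₁ x₂
      rw [h3]
    rw [← Finset.add_sum_erase Finset.univ
      (fun e => Real.log (∑ x₁, ∑ x₂, eExp η Ce lam'' e x₁ x₂)) (Finset.mem_univ e₀),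
      Egen η Ce lam lam'' e₀ s₀ hoff'', h2]
  unfold dualL
  rw [hVsum, hEsum]

set_option maxHeartbeats 1000000 in
/-- The EMP update satisfies the block optimality condition
`S_{e₀,i₀}^{λ'} = μ_{i₀}^{λ'}`, i.e. it minimizes `L` over the block
`{λ_{e₀,i₀}(x)}_{x∈χ}`. -/
theorem emp_update_block_optimal (η : ℝ) (hη : 0 < η) (hd : 2 ≤ d)
    (ends : Fin m → Fin n × Fin n)
    (hsimple : ∀ e, (ends e).1 ≠ (ends e).2)
    (Ci : Fin n → Fin d → ℝ) (Ce : Fin m → Fin d → Fin d → ℝ)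
    (lam : Fin m → Fin 2 → Fin d → ℝ) (e₀ : Fin m) (s₀ : Fin 2) :
    (∀ x, Smarg η Ce (empUpdate η ends Ci Ce lam e₀ s₀) e₀ s₀ x
        = muV η ends Ci (empUpdate η ends Ci Ce lam e₀ s₀) (ep ends e₀ s₀) x) ∧
    (∀ lam' : Fin m → Fin 2 → Fin d → ℝ,
      (∀ e s x, ¬(e = e₀ ∧ s = s₀) → lam' e s x = lam e s x) →
      dualL η ends Ci Ce (empUpdate η ends Ci Ce lam e₀ s₀)
        ≤ dualL η ends Ci Ce lam') := by
  have hd0 : 0 < d := by omega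
  haveI : Nonempty (Fin d) := Fin.pos_iff_nonempty.mp hd0
  set i₀ := ep ends e₀ s₀ with hi₀
  set lamS := empUpdate η ends Ci Ce lam e₀ s₀ with hlamS
  set v : Fin d → ℝ := fun x => vExp η ends Ci lam i₀ x with hvdef
  set T : Fin d → ℝ := fun x =>
    if s₀ = 0 then ∑ y, eExp η Ce lam e₀ x y else ∑ y, eExp η Ce lam e₀ y x with hTdef
  have hvpos : ∀ x, 0 < v x := fun x => Real.exp_pos _
  have hTpos : ∀ x, 0 < T x := by
    intro x
    simp only [hTdef]
    split <;> exact Finset.sum_pos (fun y _ => Real.exp_pos _) Finset.univ_nonempty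
  set Zv := ∑ x, v x with hZv
  set Ze := ∑ x₁, ∑ x₂, eExp η Ce lam e₀ x₁ x₂ with hZe
  have hZvpos : 0 < Zv :=
    Finset.sum_pos (fun x _ => hvpos x) Finset.univ_nonempty
  have hZepos : 0 < Ze :=
    Finset.sum_pos (fun x _ =>
      Finset.sum_pos (fun y _ => Real.exp_pos _) Finset.univ_nonempty) Finset.univ_nonempty
  -- off-block agreement of lamS with lam
  have hoffS : ∀ e s x, ¬(e = e₀ ∧ s = s₀) → lamS e s x = lam e s x := by
    intro e s x h
    simp only [hlamS, empUpdate, if_neg h]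
  -- the marginalized edge factor for any off-block-agreeing lam''
  have hTgen : ∀ (lam'' : Fin m → Fin 2 → Fin d → ℝ),
      (∀ e s x, ¬(e = e₀ ∧ s = s₀) → lam'' e s x = lam e s x) → ∀ x,
      (if s₀ = 0 then ∑ y, eExp η Ce lam'' e₀ x y else ∑ y, eExp η Ce lam'' e₀ y x)
        = T x * Real.exp (-(η * (lam'' e₀ s₀ x - lam e₀ s₀ x))) := by
    intro lam'' hoff'' x
    rcases fin2_cases s₀ with hs | hs
    · rw [if_pos hs]
      calc (∑ y, eExp η Ce lam'' e₀ x y)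
          = ∑ y, eExp η Ce lam e₀ x y
              * Real.exp (-(η * (lam'' e₀ s₀ x - lam e₀ s₀ x))) := by
            refine Finset.sum_congr rfl fun y _ => ?_
            rw [eExp_update_e₀ η Ce lam lam'' e₀ s₀ hoff'' x y, if_pos hs]
        _ = T x * Real.exp (-(η * (lam'' e₀ s₀ x - lam e₀ s₀ x))) := by
            rw [← Finset.sum_mul]
            simp only [hTdef, if_pos hs]
    · have hs' : ¬ s₀ = 0 := by simp [hs]
      rw [if_neg hs']
      calc (∑ y, eExp η Ce lam'' e₀ y x)
          = ∑ y, eExp η Ce lam e₀ y x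
              * Real.exp (-(η * (lam'' e₀ s₀ x - lam e₀ s₀ x))) := by
            refine Finset.sum_congr rfl fun y _ => ?_
            rw [eExp_update_e₀ η Ce lam lam'' e₀ s₀ hoff'' y x, if_neg hs']
        _ = T x * Real.exp (-(η * (lam'' e₀ s₀ x - lam e₀ s₀ x))) := by
            rw [← Finset.sum_mul]
            simp only [hTdef, if_neg hs']
  have hEgen : ∀ (lam'' : Fin m → Fin 2 → Fin d → ℝ),
      (∀ e s x, ¬(e = e₀ ∧ s = s₀) → lam'' e s x = lam e s x) →
      (∑ x₁, ∑ x₂, eExp η Ce lam'' e₀ x₁ x₂)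
        = ∑ x, T x * Real.exp (-(η * (lam'' e₀ s₀ x - lam e₀ s₀ x))) := by
    intro lam'' hoff''
    have step : (∑ x₁, ∑ x₂, eExp η Ce lam'' e₀ x₁ x₂)
        = ∑ x, (if s₀ = 0 then ∑ y, eExp η Ce lam'' e₀ x y
            else ∑ y, eExp η Ce lam'' e₀ y x) := by
      rcases fin2_cases s₀ with hs | hs
      · simp only [if_pos hs]
      · simp only [if_neg (show ¬ s₀ = 0 by simp [hs])]
        exact Finset.sum_comm
    rw [step]
    exact Finset.sum_congr rfl fun x _ => hTgen lam'' hoff'' x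
  -- the pseudo-marginals at the base point
  have hS : ∀ x, Smarg η Ce lam e₀ s₀ x = T x / Ze := by
    intro x
    rw [Smarg_eq, ← hZe, hTdef]
  have hmu : ∀ x, muV η ends Ci lam i₀ x = v x / Zv := fun x => rfl
  -- the multiplicative update factor
  set u : Fin d → ℝ := fun x => Real.exp (η * (lamS e₀ s₀ x - lam e₀ s₀ x)) with hudef
  have hupos : ∀ x, 0 < u x := fun x => Real.exp_pos _
  have hu2 : ∀ x, u x ^ 2 = (T x / Ze) / (v x / Zv) := by
    intro x
    have hratio : (0:ℝ) < (T x / Ze) / (v x / Zv) :=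
      div_pos (div_pos (hTpos x) hZepos) (div_pos (hvpos x) hZvpos)
    have hδ : lamS e₀ s₀ x - lam e₀ s₀ x
        = (1 / (2 * η)) * Real.log ((T x / Ze) / (v x / Zv)) := by
      have h0 : lamS e₀ s₀ x = lam e₀ s₀ x + (1 / (2 * η)) *
          Real.log (Smarg η Ce lam e₀ s₀ x / muV η ends Ci lam (ep ends e₀ s₀) x) := by
        simp only [hlamS, empUpdate, and_self, if_true]
      rw [h0, ← hi₀, hS x, hmu x]
      ring
    rw [hudef]
    simp only
    rw [hδ, sq, ← Real.exp_add, ← Real.exp_log hratio]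
    congr 1
    field_simp
    rw [Real.log_exp]
    ring
  have hmatch : ∀ x, v x * u x = (Zv / Ze) * (T x / u x) := by
    intro x
    apply mul_right_cancel₀ (hupos x).ne'
    have h1 : (Zv / Ze) * (T x / u x) * u x = (Zv / Ze) * T x := by
      field_simp
      simp [(hupos x).ne']
    rw [h1, mul_assoc, ← sq, hu2 x]
    field_simp [hZvpos.ne', hZepos.ne', (hvpos x).ne']
  have hcpos : (0:ℝ) < Zv / Ze := div_pos hZvpos hZepos
  -- the updated vertex factor
  have hvS : ∀ x, vExp η ends Ci lamS i₀ x = v x * u x := by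
    intro x
    rw [vExp_update η ends Ci lam lamS e₀ s₀ hoffS i₀ x, if_pos rfl]
  have hexpneg : ∀ x, Real.exp (-(η * (lamS e₀ s₀ x - lam e₀ s₀ x))) = (u x)⁻¹ := by
    intro x
    rw [Real.exp_neg]
  clear_value i₀ lamS v T Zv Ze u
  constructor
  · -- Part 1: the matching condition at the updated point
    intro x
    rw [Smarg_eq, hTgen lamS hoffS x, hEgen lamS hoffS]
    simp only [hexpneg]
    have hsum : (∑ x', T x' * (u x')⁻¹) = ∑ x', T x' / u x' := by
      simp [div_eq_mul_inv]
    rw [hsum]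
    unfold muV
    simp only [hvS]
    rw [show T x * (u x)⁻¹ = T x / u x from (div_eq_mul_inv _ _).symm]
    simp_rw [hmatch]
    rw [← Finset.mul_sum, mul_div_mul_left _ _ hcpos.ne']
  · -- Part 2: minimality over the block
    intro lam' hoff'
    set w : Fin d → ℝ := fun x => Real.exp (η * (lam' e₀ s₀ x - lam e₀ s₀ x)) with hwdef
    have hwpos : ∀ x, 0 < w x := fun x => Real.exp_pos _
    clear_value w
    have hAu : (0:ℝ) < ∑ x, v x * u x :=
      Finset.sum_pos (fun x _ => mul_pos (hvpos x) (hupos x)) Finset.univ_nonempty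
    have hBu : (0:ℝ) < ∑ x, T x * (u x)⁻¹ :=
      Finset.sum_pos (fun x _ => mul_pos (hTpos x) (inv_pos.mpr (hupos x)))
        Finset.univ_nonempty
    have hAw : (0:ℝ) < ∑ x, v x * w x :=
      Finset.sum_pos (fun x _ => mul_pos (hvpos x) (hwpos x)) Finset.univ_nonempty
    have hBw : (0:ℝ) < ∑ x, T x * (w x)⁻¹ :=
      Finset.sum_pos (fun x _ => mul_pos (hTpos x) (inv_pos.mpr (hwpos x)))
        Finset.univ_nonempty
    have hinv : ∀ (z : Fin d → ℝ), (∑ x, T x * (z x)⁻¹) = ∑ x, T x / z x := by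
      intro z
      simp [div_eq_mul_inv]
    have hcore : (∑ x, v x * u x) * (∑ x, T x * (u x)⁻¹)
        ≤ (∑ x, v x * w x) * (∑ x, T x * (w x)⁻¹) := by
      rw [hinv u, hinv w]
      exact core_ineq v T u w hvpos hTpos hupos hwpos _ hcpos hmatch
    have hlog : Real.log (∑ x, v x * u x) + Real.log (∑ x, T x * (u x)⁻¹)
        ≤ Real.log (∑ x, v x * w x) + Real.log (∑ x, T x * (w x)⁻¹) := by
      rw [← Real.log_mul hAu.ne' hBu.ne', ← Real.log_mul hAw.ne' hBw.ne']
      exact Real.log_le_log (mul_pos hAu hBu) hcore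
    have hηinv : (0:ℝ) ≤ 1 / η := by positivity
    have h2 := mul_le_mul_of_nonneg_left hlog hηinv
    rw [mul_add, mul_add] at h2
    have key : (1 / η) * (Real.log (∑ x, v x * u x)
          + ∑ i ∈ Finset.univ.erase i₀, Real.log (∑ x, vExp η ends Ci lam i x))
        + (1 / η) * (Real.log (∑ x, T x * (u x)⁻¹)
          + ∑ e ∈ Finset.univ.erase e₀, Real.log (∑ x₁, ∑ x₂, eExp η Ce lam e x₁ x₂))
        ≤ (1 / η) * (Real.log (∑ x, v x * w x)
          + ∑ i ∈ Finset.univ.erase i₀, Real.log (∑ x, vExp η ends Ci lam i x))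
        + (1 / η) * (Real.log (∑ x, T x * (w x)⁻¹)
          + ∑ e ∈ Finset.univ.erase e₀, Real.log (∑ x₁, ∑ x₂, eExp η Ce lam e x₁ x₂)) := by
      simp only [mul_add]
      linarith
    rw [dualL_decomp η ends Ci Ce lam e₀ s₀ lamS hoffS,
      dualL_decomp η ends Ci Ce lam e₀ s₀ lam' hoff', ← hi₀]
    simp only [hvdef, hTdef, hudef, hwdef] at key
    simp only [← Real.exp_neg] at key ⊢
    exact key

end
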